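/- arXiv:2306.03249 — 2 statements merged into one kernel-verified Lean document; each statement's English description precedes it below -/
import Mathlib

section
/- Let r, s : ℝ^L × ℝ^D → ℝ be twice continuously differentiable and let β# : ℝ^L → ℝ^D be differentiable with ∇₂s(θ, β#(θ)) = 0 for all θ and ∇₂₂²s(θ, β#(θ)) invertible (so that the Jacobian J# := ∂β#/∂θ satisfies J# · ∇₂₂²s(θ, β#) + ∇₁₂²s(θ, β#) = 0). Assume: ∇₂s(θ, ·) is L₂ˢ-Lipschitz in β, ∇₂₂²s(θ, ·) is L₂₂ˢ-Lipschitz in β, ∇₁₂²r(θ, ·) is L₁₂ʳ-Lipschitz in β, and that the shared second-derivative condition ∇₁₂²r(θ, β#(θ)) = ∇₁₂²s(θ, β#(θ)) holds. Let β^⟨I⟩ : ℝ^L → ℝ^D be differentiable with Jacobian J^⟨I⟩ := ∂β^⟨I⟩/∂θ satisfying ‖J^⟨I⟩‖₂ ≤ J_M. Define the target gradient g# := ∇₁r(θ, β#(θ)) and the automatic (network) gradient g̃^⟨I⟩ := ∇₁r(θ, β^⟨I⟩) + J^⟨I⟩ · ∇₂s(θ, β^⟨I⟩). Then ‖g̃^⟨I⟩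 − g#‖₂ ≤ (L₁₂ʳ/2 + J_M L₂₂ˢ/2) ‖β^⟨I⟩ − β#‖₂² + L₂ˢ ‖J^⟨I⟩ − J#‖₂ ‖β^⟨I⟩ − β#‖₂. -/
/-- `∇₁f(θ, β)`: gradient of `f` with respect to its first argument. -/
noncomputable def grad1 {L D : ℕ}
    (f : EuclideanSpace ℝ (Fin L) × EuclideanSpace ℝ (Fin D) → ℝ)
    (θ : EuclideanSpace ℝ (Fin L)) (β : EuclideanSpace ℝ (Fin D)) :
    EuclideanSpace ℝ (Fin L) :=
  gradient (fun θ' => f (θ', β)) θ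

/-- `∇₂f(θ, β)`: gradient of `f` with respect to its second argument. -/
noncomputable def grad2 {L D : ℕ}
    (f : EuclideanSpace ℝ (Fin L) × EuclideanSpace ℝ (Fin D) → ℝ)
    (θ : EuclideanSpace ℝ (Fin L)) (β : EuclideanSpace ℝ (Fin D)) :
    EuclideanSpace ℝ (Fin D) :=
  gradient (fun β' => f (θ, β')) β

/-- `∇₂₂²f(θ, β)`: the Hessian in the second argument, as a continuous linear map. -/
noncomputable def hess22 {L D : ℕ}
    (f : EuclideanSpace ℝ (Fin L) × EuclideanSpace ℝ (Fin D) → ℝ)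
    (θ : EuclideanSpace ℝ (Fin L)) (β : EuclideanSpace ℝ (Fin D)) :
    EuclideanSpace ℝ (Fin D) →L[ℝ] EuclideanSpace ℝ (Fin D) :=
  fderiv ℝ (fun β' => grad2 f θ β') β

/-- `∇₁₂²f(θ, β)`: the mixed second derivative, i.e. the derivative in `θ` of
`θ' ↦ ∇₂f(θ', β)`. -/
noncomputable def mixed12 {L D : ℕ}
    (f : EuclideanSpace ℝ (Fin L) × EuclideanSpace ℝ (Fin D) → ℝ)
    (θ : EuclideanSpace ℝ (Fin L)) (β : EuclideanSpace ℝ (Fin D)) :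
    EuclideanSpace ℝ (Fin L) →L[ℝ] EuclideanSpace ℝ (Fin D) :=
  fderiv ℝ (fun θ' => grad2 f θ' β) θ

section Aux

open ContinuousLinearMap InnerProductSpace

/-- Quadratic Taylor remainder bound for a function with Lipschitz-at-`p` derivative. -/
theorem taylor_quadratic {E F : Type*} [NormedAddCommGroup E] [NormedSpace ℝ E]
    [NormedAddCommGroup F] [NormedSpace ℝ F]
    {g : E → F} {g' : E → E →L[ℝ] F} (hg : ∀ x, HasFDerivAt g (g' x) x)
    {K : ℝ} (p b : E) (hK : ∀ x, ‖g' x - g' p‖ ≤ K * ‖x - p‖) :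
    ‖g b - g p - g' p (b - p)‖ ≤ K / 2 * ‖b - p‖ ^ 2 := by
  set v := b - p with hv
  set ψ : ℝ → F := fun t => g (p + t • v) - t • (g' p v) - g p with hψ
  have hψd : ∀ t : ℝ, HasDerivAt ψ (g' (p + t • v) v - g' p v) t := by
    intro t
    have h1 : HasDerivAt (fun t : ℝ => p + t • v) v t := by
      simpa using ((hasDerivAt_id t).smul_const v).const_add p
    have h2 : HasDerivAt (fun t : ℝ => g (p + t • v)) (g' (p + t • v) v) t := by
      exact (hg (p + t • v)).comp_hasDerivAt t h1
    simpa [hψ] using (h2.sub ((hasDerivAt_id t).smul_const (g' p v))).sub_const (g p)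
  have hB : ∀ t : ℝ, HasDerivAt (fun t : ℝ => K * ‖v‖ ^ 2 * t ^ 2 / 2) (K * ‖v‖ ^ 2 * t) t := by
    intro t
    have : HasDerivAt (fun t : ℝ => K * ‖v‖ ^ 2 * t ^ 2 / 2)
        (K * ‖v‖ ^ 2 * (↑2 * t ^ 1) / 2) t :=
      ((hasDerivAt_pow 2 t).const_mul (K * ‖v‖ ^ 2)).div_const 2
    convert this using 1
    ring
  have bound : ∀ t ∈ Set.Ico (0:ℝ) 1, ‖g' (p + t • v) v - g' p v‖ ≤ K * ‖v‖ ^ 2 * t := by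
    intro t ht
    have h3 : ‖g' (p + t • v) v - g' p v‖ ≤ ‖g' (p + t • v) - g' p‖ * ‖v‖ := by
      have := (g' (p + t • v) - g' p).le_opNorm v
      simpa using this
    have h4 : ‖g' (p + t • v) - g' p‖ ≤ K * (t * ‖v‖) := by
      have := hK (p + t • v)
      simpa [norm_smul, abs_of_nonneg ht.1] using this
    calc ‖g' (p + t • v) v - g' p v‖ ≤ K * (t * ‖v‖) * ‖v‖ :=
          h3.trans (mul_le_mul_of_nonneg_right h4 (norm_nonneg v))
      _ = K * ‖v‖ ^ 2 * t := by ring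
  have key : ∀ x ∈ Set.Icc (0:ℝ) 1, ‖ψ x‖ ≤ K * ‖v‖ ^ 2 * x ^ 2 / 2 := by
    intro x hx
    have := image_norm_le_of_norm_deriv_right_le_deriv_boundary (a := 0) (b := 1)
      (f := ψ) (f' := fun t => g' (p + t • v) v - g' p v)
      (fun t _ => (hψd t).continuousAt.continuousWithinAt)
      (fun t ht => (hψd t).hasDerivWithinAt)
      (B := fun t => K * ‖v‖ ^ 2 * t ^ 2 / 2) (B' := fun t => K * ‖v‖ ^ 2 * t)
      (by simp [hψ]) hB bound hx
    simpa using this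
  have h1 : ψ 1 = g b - g' p v - g p := by simp [hψ, hv]
  have := key 1 ⟨zero_le_one, le_refl 1⟩
  rw [h1] at this
  norm_num at this
  calc ‖g b - g p - g' p (b - p)‖ = ‖g b - g' p v - g p‖ := by rw [← hv]; congr 1; abel
    _ ≤ K / 2 * ‖v‖ ^ 2 := by linarith [this]

variable {L D : ℕ}

local notation "E" => EuclideanSpace ℝ (Fin L)
local notation "F" => EuclideanSpace ℝ (Fin D)

/-- `B ↦ (toDual F).symm (B ∘L inr)` as a continuous linear map. -/
noncomputable def T2 (L D : ℕ) :
    ((EuclideanSpace ℝ (Fin L) × EuclideanSpace ℝ (Fin D)) →L[ℝ] ℝ)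
    →L[ℝ] EuclideanSpace ℝ (Fin D) :=
  LinearMap.toContinuousLinearMap
  { toFun := fun B => (toDual ℝ (EuclideanSpace ℝ (Fin D))).symm
      (B.comp (inr ℝ (EuclideanSpace ℝ (Fin L)) (EuclideanSpace ℝ (Fin D))))
    map_add' := fun A B => by simp [ContinuousLinearMap.add_comp]
    map_smul' := fun c B => by simp [ContinuousLinearMap.smul_comp] }

/-- `B ↦ (toDual E).symm (B ∘L inl)` as a continuous linear map. -/
noncomputable def T1 (L D : ℕ) :
    ((EuclideanSpace ℝ (Fin L) × EuclideanSpace ℝ (Fin D)) →L[ℝ] ℝ)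
    →L[ℝ] EuclideanSpace ℝ (Fin L) :=
  LinearMap.toContinuousLinearMap
  { toFun := fun B => (toDual ℝ (EuclideanSpace ℝ (Fin L))).symm
      (B.comp (inl ℝ (EuclideanSpace ℝ (Fin L)) (EuclideanSpace ℝ (Fin D))))
    map_add' := fun A B => by simp [ContinuousLinearMap.add_comp]
    map_smul' := fun c B => by simp [ContinuousLinearMap.smul_comp] }

lemma T2_apply (B : (E × F) →L[ℝ] ℝ) :
    T2 L D B = (toDual ℝ (EuclideanSpace ℝ (Fin D))).symm (B.comp (inr ℝ E F)) := rfl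

lemma T1_apply (B : (E × F) →L[ℝ] ℝ) :
    T1 L D B = (toDual ℝ (EuclideanSpace ℝ (Fin L))).symm (B.comp (inl ℝ E F)) := rfl

lemma inner_T2 (B : (E × F) →L[ℝ] ℝ) (w : F) :
    @inner ℝ _ _ (T2 L D B) w = B ((0 : E), w) := by
  rw [T2_apply, toDual_symm_apply]; rfl

lemma inner_T1 (B : (E × F) →L[ℝ] ℝ) (u : E) :
    @inner ℝ _ _ (T1 L D B) u = B (u, (0 : F)) := by
  rw [T1_apply, toDual_symm_apply]; rfl

lemma grad2_eq_T2 {f : E × F → ℝ} (hf : Differentiable ℝ f) (θ : E) (β : F) :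
    grad2 f θ β = T2 L D (fderiv ℝ f (θ, β)) := by
  have hslice : fderiv ℝ (fun β' => f (θ, β')) β = (fderiv ℝ f (θ, β)).comp (inr ℝ E F) :=
    ((hf (θ, β)).hasFDerivAt.comp β (hasFDerivAt_prodMk_right θ β)).fderiv
  rw [grad2, gradient, hslice, T2_apply]

lemma grad1_eq_T1 {f : E × F → ℝ} (hf : Differentiable ℝ f) (θ : E) (β : F) :
    grad1 f θ β = T1 L D (fderiv ℝ f (θ, β)) := by
  have hslice : fderiv ℝ (fun θ' => f (θ', β)) θ = (fderiv ℝ f (θ, β)).comp (inl ℝ E F) :=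
    ((hf (θ, β)).hasFDerivAt.comp θ (hasFDerivAt_prodMk_left θ β)).fderiv
  rw [grad1, gradient, hslice, T1_apply]

lemma hasFDerivAt_grad2_right {f : E × F → ℝ} (hf : ContDiff ℝ 2 f) (θ : E) (β : F) :
    HasFDerivAt (fun β' => grad2 f θ β')
      ((T2 L D).comp ((fderiv ℝ (fderiv ℝ f) (θ, β)).comp (inr ℝ E F))) β := by
  have hf1 : ContDiff ℝ 1 (fderiv ℝ f) := hf.fderiv_right (by norm_num)
  have h1 : HasFDerivAt (fun β' : EuclideanSpace ℝ (Fin D) => fderiv ℝ f (θ, β'))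
      ((fderiv ℝ (fderiv ℝ f) (θ, β)).comp (inr ℝ E F)) β :=
    ((hf1.differentiable one_ne_zero (θ, β)).hasFDerivAt).comp β (hasFDerivAt_prodMk_right θ β)
  have h2 := ((T2 L D).hasFDerivAt.comp β h1)
  refine h2.congr_of_eventuallyEq (Filter.Eventually.of_forall fun β' => ?_)
  exact grad2_eq_T2 (hf.differentiable two_ne_zero) θ β'

lemma hasFDerivAt_grad2_left {f : E × F → ℝ} (hf : ContDiff ℝ 2 f) (θ : E) (β : F) :
    HasFDerivAt (fun θ' => grad2 f θ' β)
      ((T2 L D).comp ((fderiv ℝ (fderiv ℝ f) (θ, β)).comp (inl ℝ E F))) θ := by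
  have hf1 : ContDiff ℝ 1 (fderiv ℝ f) := hf.fderiv_right (by norm_num)
  have h1 : HasFDerivAt (fun θ' : EuclideanSpace ℝ (Fin L) => fderiv ℝ f (θ', β))
      ((fderiv ℝ (fderiv ℝ f) (θ, β)).comp (inl ℝ E F)) θ :=
    ((hf1.differentiable one_ne_zero (θ, β)).hasFDerivAt).comp θ (hasFDerivAt_prodMk_left θ β)
  have h2 := ((T2 L D).hasFDerivAt.comp θ h1)
  refine h2.congr_of_eventuallyEq (Filter.Eventually.of_forall fun θ' => ?_)
  exact grad2_eq_T2 (hf.differentiable two_ne_zero) θ' β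

lemma hasFDerivAt_grad1_right {f : E × F → ℝ} (hf : ContDiff ℝ 2 f) (θ : E) (β : F) :
    HasFDerivAt (fun β' => grad1 f θ β')
      ((T1 L D).comp ((fderiv ℝ (fderiv ℝ f) (θ, β)).comp (inr ℝ E F))) β := by
  have hf1 : ContDiff ℝ 1 (fderiv ℝ f) := hf.fderiv_right (by norm_num)
  have h1 : HasFDerivAt (fun β' : EuclideanSpace ℝ (Fin D) => fderiv ℝ f (θ, β'))
      ((fderiv ℝ (fderiv ℝ f) (θ, β)).comp (inr ℝ E F)) β :=
    ((hf1.differentiable one_ne_zero (θ, β)).hasFDerivAt).comp β (hasFDerivAt_prodMk_right θ β)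
  have h2 := ((T1 L D).hasFDerivAt.comp β h1)
  refine h2.congr_of_eventuallyEq (Filter.Eventually.of_forall fun β' => ?_)
  exact grad1_eq_T1 (hf.differentiable two_ne_zero) θ β'

lemma hess22_eq {f : E × F → ℝ} (hf : ContDiff ℝ 2 f) (θ : E) (β : F) :
    hess22 f θ β = (T2 L D).comp ((fderiv ℝ (fderiv ℝ f) (θ, β)).comp (inr ℝ E F)) :=
  (hasFDerivAt_grad2_right hf θ β).fderiv

lemma mixed12_eq {f : E × F → ℝ} (hf : ContDiff ℝ 2 f) (θ : E) (β : F) :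
    mixed12 f θ β = (T2 L D).comp ((fderiv ℝ (fderiv ℝ f) (θ, β)).comp (inl ℝ E F)) :=
  (hasFDerivAt_grad2_left hf θ β).fderiv

lemma second_symm {f : E × F → ℝ} (hf : ContDiff ℝ 2 f) (x a b : E × F) :
    fderiv ℝ (fderiv ℝ f) x a b = fderiv ℝ (fderiv ℝ f) x b a := by
  have hf1 : ContDiff ℝ 1 (fderiv ℝ f) := hf.fderiv_right (by norm_num)
  exact second_derivative_symmetric
    (fun y => (hf.differentiable two_ne_zero y).hasFDerivAt)
    ((hf1.differentiable one_ne_zero x).hasFDerivAt) a b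

lemma adjoint_mixed12 {f : E × F → ℝ} (hf : ContDiff ℝ 2 f) (θ : E) (β : F) :
    adjoint (mixed12 f θ β)
      = (T1 L D).comp ((fderiv ℝ (fderiv ℝ f) (θ, β)).comp (inr ℝ E F)) := by
  refine ContinuousLinearMap.ext fun w => ?_
  refine ext_inner_right ℝ fun u => ?_
  rw [adjoint_inner_left, real_inner_comm, mixed12_eq hf θ β]
  have h1 : @inner ℝ _ _ ((T2 L D).comp
      ((fderiv ℝ (fderiv ℝ f) (θ, β)).comp (inl ℝ E F)) u) w
      = fderiv ℝ (fderiv ℝ f) (θ, β) (u, (0:F)) ((0:E), w) := by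
    rw [ContinuousLinearMap.comp_apply, inner_T2]; rfl
  have h2 : @inner ℝ _ _ ((T1 L D).comp
      ((fderiv ℝ (fderiv ℝ f) (θ, β)).comp (inr ℝ E F)) w) u
      = fderiv ℝ (fderiv ℝ f) (θ, β) ((0:E), w) (u, (0:F)) := by
    rw [ContinuousLinearMap.comp_apply, inner_T1]; rfl
  rw [h1, h2, second_symm hf]

lemma adjoint_hess22 {f : E × F → ℝ} (hf : ContDiff ℝ 2 f) (θ : E) (β : F) :
    adjoint (hess22 f θ β) = hess22 f θ β := by
  refine ContinuousLinearMap.ext fun w => ?_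
  refine ext_inner_right ℝ fun w' => ?_
  rw [adjoint_inner_left, real_inner_comm, hess22_eq hf θ β]
  have h1 : ∀ a b : F, @inner ℝ _ _ ((T2 L D).comp
      ((fderiv ℝ (fderiv ℝ f) (θ, β)).comp (inr ℝ E F)) a) b
      = fderiv ℝ (fderiv ℝ f) (θ, β) ((0:E), a) ((0:E), b) := by
    intro a b
    rw [ContinuousLinearMap.comp_apply, inner_T2]; rfl
  rw [h1, h1, second_symm hf]

/-- Differentiating the criticality identity: `∇₁₂²s = −∇₂₂²s ∘ J#`. -/
lemma mixed12_crit {s : E × F → ℝ} (hs : ContDiff ℝ 2 s)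
    (βs : EuclideanSpace ℝ (Fin L) → EuclideanSpace ℝ (Fin D)) (hβs : Differentiable ℝ βs)
    (hc : ∀ θ', grad2 s θ' (βs θ') = 0) (θ : E) :
    mixed12 s θ (βs θ) = -((hess22 s θ (βs θ)).comp (fderiv ℝ βs θ)) := by
  have hf1 : ContDiff ℝ 1 (fderiv ℝ s) := hs.fderiv_right (by norm_num)
  set p := βs θ with hp
  have hpair : HasFDerivAt (fun q : E × F => grad2 s q.1 q.2)
      ((T2 L D).comp (fderiv ℝ (fderiv ℝ s) (θ, p))) (θ, p) := by
    have h1 : HasFDerivAt (fderiv ℝ s) (fderiv ℝ (fderiv ℝ s) (θ, p)) (θ, p) :=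
      (hf1.differentiable one_ne_zero _).hasFDerivAt
    have h2 := (T2 L D).hasFDerivAt.comp (θ, p) h1
    refine h2.congr_of_eventuallyEq (Filter.Eventually.of_forall fun q => ?_)
    exact grad2_eq_T2 (hs.differentiable two_ne_zero) q.1 q.2
  have hcomp : HasFDerivAt (fun θ' => grad2 s θ' (βs θ'))
      (((T2 L D).comp (fderiv ℝ (fderiv ℝ s) (θ, p))).comp
        ((ContinuousLinearMap.id ℝ (EuclideanSpace ℝ (Fin L))).prod (fderiv ℝ βs θ))) θ := by
    have hmk : HasFDerivAt (fun θ' => (θ', βs θ'))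
        ((ContinuousLinearMap.id ℝ (EuclideanSpace ℝ (Fin L))).prod (fderiv ℝ βs θ)) θ :=
      HasFDerivAt.prodMk (hasFDerivAt_id θ) (hβs θ).hasFDerivAt
    exact hpair.comp θ hmk
  have hzero : (((T2 L D).comp (fderiv ℝ (fderiv ℝ s) (θ, p))).comp
      ((ContinuousLinearMap.id ℝ (EuclideanSpace ℝ (Fin L))).prod (fderiv ℝ βs θ))) = 0 := by
    have hz : HasFDerivAt (fun _ : EuclideanSpace ℝ (Fin L) => (0 : EuclideanSpace ℝ (Fin D)))
        (((T2 L D).comp (fderiv ℝ (fderiv ℝ s) (θ, p))).comp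
          ((ContinuousLinearMap.id ℝ (EuclideanSpace ℝ (Fin L))).prod (fderiv ℝ βs θ))) θ :=
      hcomp.congr_of_eventuallyEq (Filter.Eventually.of_forall fun θ' => (hc θ').symm)
    exact hz.unique (hasFDerivAt_const 0 θ)
  refine ContinuousLinearMap.ext fun v => ?_
  have hv := congrArg (fun (A : EuclideanSpace ℝ (Fin L) →L[ℝ] EuclideanSpace ℝ (Fin D)) => A v)
    hzero
  simp only [ContinuousLinearMap.comp_apply, ContinuousLinearMap.prod_apply,
    ContinuousLinearMap.coe_id', id_eq, ContinuousLinearMap.zero_apply] at hv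
  have hsplit : ((v, fderiv ℝ βs θ v) : E × F) = ((v, (0:F)) : E × F) + (((0:E), fderiv ℝ βs θ v) : E × F) := by
    simp
  rw [hsplit, map_add, map_add] at hv
  have e1 : T2 L D (fderiv ℝ (fderiv ℝ s) (θ, p) (v, (0:F))) = mixed12 s θ p v := by
    rw [mixed12_eq hs θ p]; rfl
  have e2 : T2 L D (fderiv ℝ (fderiv ℝ s) (θ, p) ((0:E), fderiv ℝ βs θ v))
      = hess22 s θ p (fderiv ℝ βs θ v) := by
    rw [hess22_eq hs θ p]; rfl
  rw [e1, e2] at hv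
  have : mixed12 s θ p v = -(hess22 s θ p (fderiv ℝ βs θ v)) := by
    linear_combination (norm := module) hv
  simpa using this

end Aux
set_option maxHeartbeats 2000000 in
/-- convergence of the automatic (network) gradient in bilevel optimization.
Under the stated smoothness, criticality, invertibility, Lipschitz, shared
second-derivative and bounded-Jacobian assumptions,
`‖g̃^⟨I⟩ − g#‖ ≤ (L₁₂ʳ/2 + J_M L₂₂ˢ/2)‖β^⟨I⟩ − β#‖² + L₂ˢ‖J^⟨I⟩ − J#‖‖β^⟨I⟩ − β#‖`. -/
theorem stmt1 {L D : ℕ}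
    (r s : EuclideanSpace ℝ (Fin L) × EuclideanSpace ℝ (Fin D) → ℝ)
    (hr : ContDiff ℝ 2 r) (hs : ContDiff ℝ 2 s)
    (βsharp : EuclideanSpace ℝ (Fin L) → EuclideanSpace ℝ (Fin D))
    (hβsharp : Differentiable ℝ βsharp)
    (hcrit : ∀ θ', grad2 s θ' (βsharp θ') = 0)
    (θ : EuclideanSpace ℝ (Fin L))
    (hinv : IsUnit (hess22 s θ (βsharp θ)))
    (L2s L22s L12r : ℝ)
    (hLip2s : ∀ β β' : EuclideanSpace ℝ (Fin D),
      ‖grad2 s θ β - grad2 s θ β'‖ ≤ L2s * ‖β - β'‖)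
    (hLip22s : ∀ β β' : EuclideanSpace ℝ (Fin D),
      ‖hess22 s θ β - hess22 s θ β'‖ ≤ L22s * ‖β - β'‖)
    (hLip12r : ∀ β β' : EuclideanSpace ℝ (Fin D),
      ‖mixed12 r θ β - mixed12 r θ β'‖ ≤ L12r * ‖β - β'‖)
    (hshare : mixed12 r θ (βsharp θ) = mixed12 s θ (βsharp θ))
    (βI : EuclideanSpace ℝ (Fin L) → EuclideanSpace ℝ (Fin D))
    (hβI : Differentiable ℝ βI)
    (JM : ℝ) (hJM : ‖fderiv ℝ βI θ‖ ≤ JM) :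
    ‖(grad1 r θ (βI θ)
        + (ContinuousLinearMap.adjoint (fderiv ℝ βI θ)) (grad2 s θ (βI θ)))
      - grad1 r θ (βsharp θ)‖
      ≤ (L12r / 2 + JM * L22s / 2) * ‖βI θ - βsharp θ‖ ^ 2
        + L2s * ‖fderiv ℝ βI θ - fderiv ℝ βsharp θ‖ * ‖βI θ - βsharp θ‖ := by
  open ContinuousLinearMap in
  have hJM0 : (0:ℝ) ≤ JM := le_trans (norm_nonneg _) hJM
  set b := βI θ with hb
  set p := βsharp θ with hpdef
  set J := fderiv ℝ βI θ with hJdef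
  set Jp := fderiv ℝ βsharp θ with hJpdef
  set H := hess22 s θ p with hHdef
  set v := b - p with hvdef
  -- derivative of `β ↦ grad1 r θ β` is the adjoint of the mixed second derivative
  have hDr : ∀ x, HasFDerivAt (fun β' => grad1 r θ β')
      (ContinuousLinearMap.adjoint (mixed12 r θ x)) x := by
    intro x
    rw [adjoint_mixed12 hr θ x]
    exact hasFDerivAt_grad1_right hr θ x
  have hA : ‖grad1 r θ b - grad1 r θ p
      - ContinuousLinearMap.adjoint (mixed12 r θ p) v‖ ≤ L12r / 2 * ‖v‖ ^ 2 := by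
    rw [hvdef]
    refine taylor_quadratic hDr p b fun x => ?_
    rw [← map_sub, LinearIsometryEquiv.norm_map]
    exact hLip12r x p
  have hgrad2 : ∀ x, HasFDerivAt (fun β' => grad2 s θ β') (hess22 s θ x) x := by
    intro x
    rw [hess22_eq hs θ x]
    exact hasFDerivAt_grad2_right hs θ x
  have hB : ‖grad2 s θ b - grad2 s θ p - H v‖ ≤ L22s / 2 * ‖v‖ ^ 2 := by
    rw [hvdef, hHdef]
    exact taylor_quadratic hgrad2 p b fun x => hLip22s x p
  have hcrit0 : grad2 s θ p = 0 := hcrit θ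
  have hmix : mixed12 s θ p = -(H.comp Jp) := mixed12_crit hs βsharp hβsharp hcrit θ
  have hHw : ∀ w, ‖H w‖ ≤ L2s * ‖w‖ := by
    intro w
    rcases eq_or_ne w 0 with rfl | hw
    · simp
    · have hwpos : 0 < ‖w‖ := norm_pos_iff.mpr hw
      have h0 : (0:ℝ) ≤ L2s * ‖w‖ := le_trans (norm_nonneg _) (by simpa using hLip2s w 0)
      have hL : 0 ≤ L2s := by nlinarith
      have hnorm : ‖H‖ ≤ L2s := by
        have h1 : ‖fderiv ℝ (fun β' => grad2 s θ β') p‖ ≤ L2s :=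
          norm_fderiv_le_of_lip' ℝ hL (Filter.Eventually.of_forall fun x => hLip2s x p)
        exact h1
      calc ‖H w‖ ≤ ‖H‖ * ‖w‖ := H.le_opNorm w
        _ ≤ L2s * ‖w‖ := mul_le_mul_of_nonneg_right hnorm (norm_nonneg w)
  -- the cross term
  have hDrp : ContinuousLinearMap.adjoint (mixed12 r θ p) v
      = -(ContinuousLinearMap.adjoint Jp (H v)) := by
    rw [hshare, hmix, map_neg, ContinuousLinearMap.adjoint_comp, adjoint_hess22 hs θ p]
    rfl
  have hdecomp : (grad1 r θ b + ContinuousLinearMap.adjoint J (grad2 s θ b)) - grad1 r θ p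
      = (grad1 r θ b - grad1 r θ p - ContinuousLinearMap.adjoint (mixed12 r θ p) v)
        + ContinuousLinearMap.adjoint J (grad2 s θ b - grad2 s θ p - H v)
        + (ContinuousLinearMap.adjoint J (H v) - ContinuousLinearMap.adjoint Jp (H v)) := by
    rw [hDrp]
    simp only [map_sub, hcrit0, map_zero]
    abel
  have hBnd : ‖ContinuousLinearMap.adjoint J (grad2 s θ b - grad2 s θ p - H v)‖
      ≤ JM * (L22s / 2 * ‖v‖ ^ 2) := by
    calc ‖ContinuousLinearMap.adjoint J (grad2 s θ b - grad2 s θ p - H v)‖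
        ≤ ‖ContinuousLinearMap.adjoint J‖ * ‖grad2 s θ b - grad2 s θ p - H v‖ :=
          (ContinuousLinearMap.adjoint J).le_opNorm _
      _ = ‖J‖ * ‖grad2 s θ b - grad2 s θ p - H v‖ := by
          rw [LinearIsometryEquiv.norm_map]
      _ ≤ JM * ‖grad2 s θ b - grad2 s θ p - H v‖ :=
          mul_le_mul_of_nonneg_right hJM (norm_nonneg _)
      _ ≤ JM * (L22s / 2 * ‖v‖ ^ 2) := mul_le_mul_of_nonneg_left hB hJM0
  have hCnd : ‖ContinuousLinearMap.adjoint J (H v) - ContinuousLinearMap.adjoint Jp (H v)‖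
      ≤ L2s * ‖J - Jp‖ * ‖v‖ := by
    have e2 : ContinuousLinearMap.adjoint (J - Jp)
        = ContinuousLinearMap.adjoint J - ContinuousLinearMap.adjoint Jp := map_sub _ J Jp
    have e1 : ContinuousLinearMap.adjoint J (H v) - ContinuousLinearMap.adjoint Jp (H v)
        = ContinuousLinearMap.adjoint (J - Jp) (H v) := by
      rw [e2]; rfl
    rw [e1]
    calc ‖ContinuousLinearMap.adjoint (J - Jp) (H v)‖
        ≤ ‖ContinuousLinearMap.adjoint (J - Jp)‖ * ‖H v‖ :=
          (ContinuousLinearMap.adjoint (J - Jp)).le_opNorm _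
      _ = ‖J - Jp‖ * ‖H v‖ := by rw [LinearIsometryEquiv.norm_map]
      _ ≤ ‖J - Jp‖ * (L2s * ‖v‖) :=
          mul_le_mul_of_nonneg_left (hHw v) (norm_nonneg _)
      _ = L2s * ‖J - Jp‖ * ‖v‖ := by ring
  calc ‖(grad1 r θ b + ContinuousLinearMap.adjoint J (grad2 s θ b)) - grad1 r θ p‖
      = ‖(grad1 r θ b - grad1 r θ p - ContinuousLinearMap.adjoint (mixed12 r θ p) v)
          + ContinuousLinearMap.adjoint J (grad2 s θ b - grad2 s θ p - H v)
          + (ContinuousLinearMap.adjoint J (H v) - ContinuousLinearMap.adjoint Jp (H v))‖ := by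
        rw [hdecomp]
    _ ≤ ‖(grad1 r θ b - grad1 r θ p - ContinuousLinearMap.adjoint (mixed12 r θ p) v)
          + ContinuousLinearMap.adjoint J (grad2 s θ b - grad2 s θ p - H v)‖
        + ‖ContinuousLinearMap.adjoint J (H v) - ContinuousLinearMap.adjoint Jp (H v)‖ :=
          norm_add_le _ _
    _ ≤ (‖grad1 r θ b - grad1 r θ p - ContinuousLinearMap.adjoint (mixed12 r θ p) v‖
          + ‖ContinuousLinearMap.adjoint J (grad2 s θ b - grad2 s θ p - H v)‖)
        + ‖ContinuousLinearMap.adjoint J (H v) - ContinuousLinearMap.adjoint Jp (H v)‖ := by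
          gcongr
          exact norm_add_le _ _
    _ ≤ (L12r / 2 * ‖v‖ ^ 2 + JM * (L22s / 2 * ‖v‖ ^ 2)) + L2s * ‖J - Jp‖ * ‖v‖ := by
          gcongr
    _ = (L12r / 2 + JM * L22s / 2) * ‖v‖ ^ 2 + L2s * ‖J - Jp‖ * ‖v‖ := by ring
end

section
/- Let A : ℝ^L → ℝ^{D×D} and u : ℝ^L → ℝ^D be differentiable, with A_θ invertible for all θ, fix a step size α ∈ ℝ, and define the gradient-descent iterates β^⟨0⟩(θ) := 0 and β^⟨I+1⟩(θ) := β^⟨I⟩(θ) − α(A_θ β^⟨I⟩(θ) − u_θ), together with β#(θ) := A_θ^{-1} u_θ. Let e^⟨I⟩(θ) := β^⟨I⟩(θ) − β#(θ) and, for a coordinate θ_ℓ, let B^⟨I⟩ := ∂e^⟨I⟩/∂θ_ℓ. Then each β^⟨I⟩ is differentiable and the Jacobian error satisfies the recursion B^⟨I+1⟩ = (I − α A_θ) B^⟨I⟩ − α (∂A_θ/∂θ_ℓ) e^⟨I⟩. -/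
open Matrix

private lemma euclid_differentiable {L D : ℕ}
    {f : EuclideanSpace ℝ (Fin L) → EuclideanSpace ℝ (Fin D)}
    (hf : ∀ i, Differentiable ℝ fun θ' => f θ' i) : Differentiable ℝ f := by
  have h : Differentiable ℝ ((PiLp.continuousLinearEquiv 2 ℝ (fun _ : Fin D => ℝ)) ∘ f) :=
    differentiable_pi.mpr hf
  exact (PiLp.continuousLinearEquiv 2 ℝ (fun _ : Fin D => ℝ)).comp_differentiable_iff.mp h

private lemma euclid_fderiv_apply {L D : ℕ}
    {f : EuclideanSpace ℝ (Fin L) → EuclideanSpace ℝ (Fin D)}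
    {θ : EuclideanSpace ℝ (Fin L)}
    (hf : DifferentiableAt ℝ f θ) (v : EuclideanSpace ℝ (Fin L)) (i : Fin D) :
    fderiv ℝ f θ v i = fderiv ℝ (fun θ' => f θ' i) θ v := by
  have h : (fun θ' => f θ' i) = (EuclideanSpace.proj i : EuclideanSpace ℝ (Fin D) →L[ℝ] ℝ) ∘ f := rfl
  rw [h, fderiv_comp θ (EuclideanSpace.proj i).differentiableAt hf,
    ContinuousLinearMap.fderiv]
  rfl

private lemma toEuclideanLin_apply' {D : ℕ} (M : Matrix (Fin D) (Fin D) ℝ)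
    (v : EuclideanSpace ℝ (Fin D)) (i : Fin D) :
    Matrix.toEuclideanLin M v i = ∑ j, M i j * v j := rfl

private lemma proj_diff {L D : ℕ}
    {g : EuclideanSpace ℝ (Fin L) → EuclideanSpace ℝ (Fin D)}
    (hg : Differentiable ℝ g) (j : Fin D) :
    Differentiable ℝ fun θ' => g θ' j :=
  ((EuclideanSpace.proj j : EuclideanSpace ℝ (Fin D) →L[ℝ] ℝ).differentiable.comp hg : _)

private lemma key_diff {L D : ℕ}
    {M : EuclideanSpace ℝ (Fin L) → Matrix (Fin D) (Fin D) ℝ}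
    (hM : ∀ i j, Differentiable ℝ fun θ' => M θ' i j)
    {g : EuclideanSpace ℝ (Fin L) → EuclideanSpace ℝ (Fin D)}
    (hg : Differentiable ℝ g) :
    Differentiable ℝ fun θ' => Matrix.toEuclideanLin (M θ') (g θ') := by
  apply euclid_differentiable
  intro i
  simp only [toEuclideanLin_apply']
  exact Differentiable.fun_sum fun j _ => (hM i j).mul (proj_diff hg j)

private lemma key_fderiv {L D : ℕ}
    {M : EuclideanSpace ℝ (Fin L) → Matrix (Fin D) (Fin D) ℝ}
    (hM : ∀ i j, Differentiable ℝ fun θ' => M θ' i j)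
    {g : EuclideanSpace ℝ (Fin L) → EuclideanSpace ℝ (Fin D)}
    (hg : Differentiable ℝ g) (θ v : EuclideanSpace ℝ (Fin L)) :
    fderiv ℝ (fun θ' => Matrix.toEuclideanLin (M θ') (g θ')) θ v =
      Matrix.toEuclideanLin (M θ) (fderiv ℝ g θ v) +
      Matrix.toEuclideanLin
        (Matrix.of fun i j => fderiv ℝ (fun θ' => M θ' i j) θ v) (g θ) := by
  have hF : Differentiable ℝ fun θ' => Matrix.toEuclideanLin (M θ') (g θ') :=
    key_diff hM hg
  ext i
  rw [euclid_fderiv_apply (hF θ) v i]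
  have h1 : (fun θ' => Matrix.toEuclideanLin (M θ') (g θ') i)
      = fun θ' => ∑ j, M θ' i j * g θ' j := rfl
  rw [h1]
  have hterm : ∀ j ∈ Finset.univ, DifferentiableAt ℝ (fun θ' => M θ' i j * g θ' j) θ :=
    fun j _ => ((hM i j).mul (proj_diff hg j)) θ
  rw [fderiv_fun_sum hterm]
  simp only [ContinuousLinearMap.coe_sum', Finset.sum_apply]
  have hmul : ∀ j, fderiv ℝ (fun θ' => M θ' i j * g θ' j) θ v
      = fderiv ℝ (fun θ' => M θ' i j) θ v * g θ j
        + M θ i j * fderiv ℝ (fun θ' => g θ' j) θ v := by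
    intro j
    rw [fderiv_fun_mul ((hM i j) θ) ((proj_diff hg j) θ)]
    simp only [ContinuousLinearMap.add_apply, ContinuousLinearMap.coe_smul', Pi.smul_apply,
      smul_eq_mul]
    ring
  simp only [hmul]
  rw [Finset.sum_add_distrib]
  have h2 : (Matrix.toEuclideanLin (M θ) (fderiv ℝ g θ v) +
      Matrix.toEuclideanLin (Matrix.of fun i j => fderiv ℝ (fun θ' => M θ' i j) θ v) (g θ)) i
      = ∑ j, M θ i j * (fderiv ℝ g θ v) j
        + ∑ j, fderiv ℝ (fun θ' => M θ' i j) θ v * g θ j := rfl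
  rw [h2]
  have h3 : ∀ j, (fderiv ℝ g θ v) j = fderiv ℝ (fun θ' => g θ' j) θ v :=
    fun j => euclid_fderiv_apply (hg θ) v j
  simp only [h3]
  ring

example : True := trivial

private lemma diff_prod {L : ℕ} {ι : Type*} [DecidableEq ι] (s : Finset ι)
    (f : ι → EuclideanSpace ℝ (Fin L) → ℝ) (hf : ∀ k ∈ s, Differentiable ℝ (f k)) :
    Differentiable ℝ fun θ' => ∏ k ∈ s, f k θ' := by
  induction s using Finset.induction with
  | empty => simpa using differentiable_const (1 : ℝ)
  | @insert a s ha ih =>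
    simp only [Finset.prod_insert ha]
    exact (hf a (Finset.mem_insert_self a s)).mul
      (ih fun k hk => hf k (Finset.mem_insert_of_mem hk))

private lemma det_diff' {L D : ℕ} {M : EuclideanSpace ℝ (Fin L) → Matrix (Fin D) (Fin D) ℝ}
    (hM : ∀ i j, Differentiable ℝ fun θ' => M θ' i j) :
    Differentiable ℝ fun θ' => (M θ').det := by
  simp only [Matrix.det_apply']
  exact Differentiable.fun_sum fun σ _ =>
    (differentiable_const _).mul (diff_prod Finset.univ _ fun k _ => hM (σ k) k)

private lemma inv_entry_diff {L D : ℕ}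
    {M : EuclideanSpace ℝ (Fin L) → Matrix (Fin D) (Fin D) ℝ}
    (hM : ∀ i j, Differentiable ℝ fun θ' => M θ' i j)
    (hinv : ∀ θ', IsUnit (M θ')) (i j : Fin D) :
    Differentiable ℝ fun θ' => (M θ')⁻¹ i j := by
  have hdet0 : ∀ θ', (M θ').det ≠ 0 := fun θ' =>
    isUnit_iff_ne_zero.mp ((Matrix.isUnit_iff_isUnit_det _).mp (hinv θ'))
  have hadj : Differentiable ℝ fun θ' => (M θ').adjugate i j := by
    simp only [Matrix.adjugate_apply]
    apply det_diff'
    intro k l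
    by_cases hk : k = j
    · simp [Matrix.updateRow_apply, hk]
    · simp only [Matrix.updateRow_apply, hk, if_false]
      exact hM k l
  have h : (fun θ' => (M θ')⁻¹ i j) =
      fun θ' => ((M θ').det)⁻¹ * (M θ').adjugate i j := by
    funext θ'
    rw [Matrix.inv_def, Matrix.smul_apply, Ring.inverse_eq_inv', smul_eq_mul]
  rw [h]
  exact ((det_diff' hM).inv hdet0).mul hadj

/-- the Jacobian error of unrolled gradient descent on the quadratic
`½βᵀA_θβ − u_θᵀβ` satisfies the recursion
`B^⟨I+1⟩ = (I − αA_θ) B^⟨I⟩ − α (∂A_θ/∂θ_ℓ) e^⟨I⟩`, where `e^⟨I⟩ = β^⟨I⟩ − β#` and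
`B^⟨I⟩ = ∂e^⟨I⟩/∂θ_ℓ`. -/
theorem stmt17 {L D : ℕ}
    (A : EuclideanSpace ℝ (Fin L) → Matrix (Fin D) (Fin D) ℝ)
    (u : EuclideanSpace ℝ (Fin L) → EuclideanSpace ℝ (Fin D))
    (hA : ∀ i j, Differentiable ℝ fun θ' => A θ' i j)
    (hu : Differentiable ℝ u)
    (hinv : ∀ θ', IsUnit (A θ'))
    (α : ℝ)
    (βit : ℕ → EuclideanSpace ℝ (Fin L) → EuclideanSpace ℝ (Fin D))
    (hβ0 : ∀ θ', βit 0 θ' = 0)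
    (hβs : ∀ (I : ℕ) θ', βit (I + 1) θ' =
      βit I θ' - α • (Matrix.toEuclideanLin (A θ') (βit I θ') - u θ'))
    (βsharp : EuclideanSpace ℝ (Fin L) → EuclideanSpace ℝ (Fin D))
    (hβsharp : ∀ θ', βsharp θ' = Matrix.toEuclideanLin (A θ')⁻¹ (u θ'))
    (θ : EuclideanSpace ℝ (Fin L)) (ℓ : Fin L)
    (A' : Matrix (Fin D) (Fin D) ℝ)
    (hA' : ∀ i j, A' i j =
      fderiv ℝ (fun θ' => A θ' i j) θ (EuclideanSpace.single ℓ (1 : ℝ))) :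
    (∀ I : ℕ, Differentiable ℝ (βit I)) ∧
    ∀ I : ℕ,
      fderiv ℝ (fun θ' => βit (I + 1) θ' - βsharp θ') θ (EuclideanSpace.single ℓ (1 : ℝ))
        = Matrix.toEuclideanLin ((1 : Matrix (Fin D) (Fin D) ℝ) - α • A θ)
            (fderiv ℝ (fun θ' => βit I θ' - βsharp θ') θ (EuclideanSpace.single ℓ (1 : ℝ)))
          - α • Matrix.toEuclideanLin A' (βit I θ - βsharp θ) := by
  have hdet0 : ∀ θ', (A θ').det ≠ 0 := fun θ' =>
    isUnit_iff_ne_zero.mp ((Matrix.isUnit_iff_isUnit_det _).mp (hinv θ'))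
  -- differentiability of iterates
  have hdiff : ∀ I : ℕ, Differentiable ℝ (βit I) := by
    intro I
    induction I with
    | zero =>
      have h0 : βit 0 = fun _ => 0 := funext hβ0
      rw [h0]; exact differentiable_const _
    | succ I ih =>
      have hs : βit (I + 1) = fun θ' =>
          βit I θ' - α • (Matrix.toEuclideanLin (A θ') (βit I θ') - u θ') := funext (hβs I)
      rw [hs]
      exact ih.sub (((key_diff hA ih).sub hu).const_smul α)
  -- differentiability of βsharp
  have hsharp : Differentiable ℝ βsharp := by
    have h : βsharp = fun θ' => Matrix.toEuclideanLin (A θ')⁻¹ (u θ') := funext hβsharp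
    rw [h]
    exact key_diff (fun i j => inv_entry_diff hA hinv i j) hu
  refine ⟨hdiff, ?_⟩
  intro I
  set v := EuclideanSpace.single ℓ (1 : ℝ) with hv
  have hAu : ∀ θ', Matrix.toEuclideanLin (A θ') (βsharp θ') = u θ' := by
    intro θ'
    rw [hβsharp]
    show (WithLp.equiv 2 _).symm
        (A θ' *ᵥ (WithLp.equiv 2 _) ((WithLp.equiv 2 _).symm ((A θ')⁻¹ *ᵥ (WithLp.equiv 2 _) (u θ')))) = u θ'
    rw [Equiv.apply_symm_apply, Matrix.mulVec_mulVec, Matrix.mul_nonsing_inv _ (isUnit_iff_ne_zero.mpr (hdet0 θ')),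
      Matrix.one_mulVec, Equiv.symm_apply_apply]
  have heq : (fun θ' => βit (I + 1) θ' - βsharp θ') =
      fun θ' => (βit I θ' - βsharp θ')
        - α • Matrix.toEuclideanLin (A θ') (βit I θ' - βsharp θ') := by
    funext θ'
    rw [hβs I θ', map_sub, hAu θ']
    abel
  set g : EuclideanSpace ℝ (Fin L) → EuclideanSpace ℝ (Fin D) :=
    fun θ' => βit I θ' - βsharp θ' with hgdef
  have hg : Differentiable ℝ g := (hdiff I).sub hsharp
  have hTg : Differentiable ℝ fun θ' => Matrix.toEuclideanLin (A θ') (g θ') := key_diff hA hg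
  rw [heq]
  show fderiv ℝ (fun θ' => g θ' - α • Matrix.toEuclideanLin (A θ') (g θ')) θ v = _
  rw [fderiv_fun_sub (g := fun θ' => α • Matrix.toEuclideanLin (A θ') (g θ')) (hg θ) ((hTg.const_smul α) θ), ContinuousLinearMap.sub_apply,
    fderiv_fun_const_smul (hTg θ) α, ContinuousLinearMap.smul_apply,
    key_fderiv hA hg θ v]
  have hA'' : Matrix.of (fun i j => fderiv ℝ (fun θ' => A θ' i j) θ v) = A' := by
    ext i j
    exact (hA' i j).symm
  rw [hA'']
  have hexp : Matrix.toEuclideanLin ((1 : Matrix (Fin D) (Fin D) ℝ) - α • A θ)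
      (fderiv ℝ g θ v)
      = fderiv ℝ g θ v - α • Matrix.toEuclideanLin (A θ) (fderiv ℝ g θ v) := by
    rw [map_sub, _root_.map_smul, LinearMap.sub_apply, LinearMap.smul_apply]
    congr 1
    show (WithLp.equiv 2 _).symm ((1 : Matrix (Fin D) (Fin D) ℝ) *ᵥ (WithLp.equiv 2 _) (fderiv ℝ g θ v)) = _
    rw [Matrix.one_mulVec, Equiv.symm_apply_apply]
  rw [hexp, smul_add]
  abel
end
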